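/- Let I be an independent set in the fixed t-copy graph G, and let m₁, ..., m_t ∈ [k] be distinct with {v^i_{m_i} : i ∈ [t]} ⊆ I. Then the total weight of I is at most (t+1)ℓ + α·t². -/

import Mathlib

/-- Vertices of the fixed graph `G` with `t` copies of the base graph `H`:
`Sum.inl (i, m)` is the clique node `v^i_m ∈ A^i`, and `Sum.inr (i, h, r)` is the
code-gadget node `σ^i_(h,r) ∈ C^i_h`. -/
abbrev LinVtx (t k ℓ α : ℕ) :=
  (Fin t × Fin k) ⊕ (Fin t × Fin (ℓ + α) × Fin (ℓ + α))

/-- Adjacency of the fixed graph `G`: each `A^i` is a clique; `v^i_m` is adjacent to all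
code nodes of copy `i` except `Code^i_m = {σ^i_(h, C(m)_h)}`; each `C^i_h` is a clique,
and between `C^i_h` and `C^j_h` (for `i ≠ j`) all edges are present except the natural
perfect matching; no edges between `A^i` and `A^j` or between `A^i` and `Code^j` for
`i ≠ j`, and no edges between `C^i_h` and `C^j_{h'}` for `h ≠ h'`. -/
def linAdj (t k ℓ α : ℕ) (C : Fin k → Fin (ℓ + α) → Fin (ℓ + α)) :
    LinVtx t k ℓ α → LinVtx t k ℓ α → Prop :=
  fun u v =>
    match u, v with
    | Sum.inl (i, m), Sum.inl (i', m') => i = i' ∧ m ≠ m'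
    | Sum.inl (i, m), Sum.inr (i', h, r) => i = i' ∧ r ≠ C m h
    | Sum.inr (i', h, r), Sum.inl (i, m) => i = i' ∧ r ≠ C m h
    | Sum.inr (_, h, r), Sum.inr (_, h', r') => h = h' ∧ r ≠ r'

/-- A set of vertices is independent if it contains no two adjacent vertices. -/
def linIndep (t k ℓ α : ℕ) (C : Fin k → Fin (ℓ + α) → Fin (ℓ + α))
    (I : Set (LinVtx t k ℓ α)) : Prop :=
  ∀ u ∈ I, ∀ v ∈ I, ¬ linAdj t k ℓ α C u v
/-- Node weights of `G_x̄`: `w(v^i_m) = ℓ` if `x^i_m = 1`, else `1`; all code nodes have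
weight `1`. -/
def linWeight (t k ℓ α : ℕ) (x : Fin t → Fin k → Bool) : LinVtx t k ℓ α → ℕ :=
  fun v =>
    match v with
    | Sum.inl (i, m) => if x i m then ℓ else 1
    | Sum.inr _ => 1

/-- Corollary of the helper claim: if `I` is an independent set of the fixed `t`-copy
graph containing `v^i_{m_i}` for distinct `m_1, …, m_t`, where each selected clique node
`v^i_{m_i}` has weight `ℓ` and every code node has weight `1`, then the total weight of
`I` is at most `(t+1)ℓ + α·t²`. -/
theorem stmt9 (t k ℓ α : ℕ) (hk : k = (ℓ + α) ^ α)
    (C : Fin k → Fin (ℓ + α) → Fin (ℓ + α))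
    (hC : ∀ m m' : Fin k, m ≠ m' → ℓ ≤ hammingDist (C m) (C m'))
    (m : Fin t → Fin k) (hm : Function.Injective m)
    (w : LinVtx t k ℓ α → ℕ)
    (hwA : ∀ i : Fin t, w (Sum.inl (i, m i)) = ℓ)
    (hwCode : ∀ i h r, w (Sum.inr (i, h, r)) = 1)
    (I : Finset (LinVtx t k ℓ α)) (hI : linIndep t k ℓ α C ↑I)
    (hv : ∀ i : Fin t, Sum.inl (i, m i) ∈ I) :
    ∑ v ∈ I, w v ≤ (t + 1) * ℓ + α * t ^ 2 := by
  classical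
  rcases Nat.eq_zero_or_pos t with ht0 | ht
  · subst ht0
    have hIe : I = ∅ := Finset.eq_empty_of_forall_notMem (by
      rintro (⟨i, _⟩ | ⟨i, _⟩) _ <;> exact i.elim0)
    simp [hIe]
  -- characterize members of I
  have hinl : ∀ i m', Sum.inl (i, m') ∈ I → m' = m i := by
    intro i m' hmem
    by_contra hne
    exact hI _ (hv i) _ hmem ⟨rfl, fun e => hne e.symm⟩
  have hinr : ∀ i h r, Sum.inr (i, h, r) ∈ I → r = C (m i) h := by
    intro i h r hmem
    by_contra hne
    exact hI _ hmem _ (hv i) ⟨rfl, hne⟩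
  have hcol : ∀ i j h r r', Sum.inr (i, h, r) ∈ I → Sum.inr (j, h, r') ∈ I → r = r' := by
    intro i j h r r' h1 h2
    by_contra hne
    exact hI _ h1 _ h2 ⟨rfl, hne⟩
  -- split the sum
  rw [← Finset.sum_filter_add_sum_filter_not I (fun v => v.isLeft = true)]
  -- left part
  have hLsub : I.filter (fun v => v.isLeft = true) ⊆
      Finset.univ.image (fun i : Fin t => (Sum.inl (i, m i) : LinVtx t k ℓ α)) := by
    intro v hvmem
    rw [Finset.mem_filter] at hvmem
    rcases v with ⟨i, m'⟩ | ⟨i, h, r⟩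
    · have hmi := hinl i m' hvmem.1
      subst hmi
      exact Finset.mem_image.2 ⟨i, Finset.mem_univ i, rfl⟩
    · simp at hvmem
  have hL : ∑ v ∈ I.filter (fun v => v.isLeft = true), w v ≤ t * ℓ := by
    calc ∑ v ∈ I.filter (fun v => v.isLeft = true), w v
        ≤ ∑ v ∈ Finset.univ.image (fun i : Fin t => (Sum.inl (i, m i) : LinVtx t k ℓ α)), w v :=
          Finset.sum_le_sum_of_subset hLsub
      _ = ∑ i : Fin t, w (Sum.inl (i, m i)) := by
          apply Finset.sum_image
          intro a _ b _ hab
          have : (a, m a) = (b, m b) := Sum.inl.injEq _ _ ▸ (by injection hab)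
          exact (Prod.mk.injEq _ _ _ _ ▸ this).1
      _ = t * ℓ := by simp [hwA, Finset.sum_const, Finset.card_univ, mul_comm]
  -- right part equals its cardinality
  set Ir := I.filter (fun v => ¬ v.isLeft = true) with hIr
  have hRsum : ∑ v ∈ Ir, w v = Ir.card := by
    rw [Finset.card_eq_sum_ones]
    apply Finset.sum_congr rfl
    intro v hvm
    rcases v with ⟨i, m'⟩ | ⟨i, h, r⟩
    · rw [hIr, Finset.mem_filter] at hvm; simp at hvm
    · exact hwCode i h r
  -- map code nodes to their (copy, column) pairs
  set g : Fin t × Fin (ℓ + α) → LinVtx t k ℓ α :=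
    fun p => Sum.inr (p.1, p.2, C (m p.1) p.2) with hg
  set T : Finset (Fin t × Fin (ℓ + α)) := Finset.univ.filter (fun p => g p ∈ I) with hT
  have hIrT : Ir ⊆ T.image g := by
    intro v hvm
    rw [hIr, Finset.mem_filter] at hvm
    rcases v with ⟨i, m'⟩ | ⟨i, h, r⟩
    · simp at hvm
    · have hr := hinr i h r hvm.1
      subst hr
      exact Finset.mem_image.2 ⟨(i, h), Finset.mem_filter.2 ⟨Finset.mem_univ _, hvm.1⟩, rfl⟩
  have hcard1 : Ir.card ≤ T.card :=
    le_trans (Finset.card_le_card hIrT) (Finset.card_image_le)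
  -- count T column by column
  set S : Fin (ℓ + α) → Finset (Fin t) :=
    fun h => Finset.univ.filter (fun i => g (i, h) ∈ I) with hS
  have hTsum : T.card = ∑ h : Fin (ℓ + α), (S h).card := by
    rw [hT, Finset.card_filter]
    rw [Fintype.sum_prod_type_right]
    apply Finset.sum_congr rfl
    intro h _
    rw [hS, Finset.card_filter]
  -- per-column bound via pairs
  set Q : Fin (ℓ + α) → Finset (Fin t × Fin t) :=
    fun h => Finset.univ.filter (fun q => q.1 ≠ q.2 ∧ q.1 ∈ S h ∧ q.2 ∈ S h) with hQ
  have hcolbd : ∀ h, (S h).card ≤ 1 + (Q h).card := by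
    intro h
    rcases (S h).eq_empty_or_nonempty with he | ⟨i0, hi0⟩
    · simp [he]
    · have hinj : ((S h).erase i0).card ≤ (Q h).card := by
        apply Finset.card_le_card_of_injOn (fun j => (i0, j))
        · intro j hj
          rw [Finset.mem_coe, Finset.mem_erase] at hj; rw [Finset.mem_coe]
          exact Finset.mem_filter.2 ⟨Finset.mem_univ _, fun e => hj.1 e.symm, hi0, hj.2⟩
        · intro a _ b _ hab
          exact (Prod.mk.injEq _ _ _ _ ▸ hab).2
      rw [Finset.card_erase_of_mem hi0] at hinj
      omega
  -- pairs in the same column agree, and agreements are ≤ α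
  have hagree : ∀ a b : Fin k, a ≠ b →
      (Finset.univ.filter (fun h : Fin (ℓ + α) => C a h = C b h)).card ≤ α := by
    intro a b hab
    have hd := hC a b hab
    have hsplit := Finset.card_filter_add_card_filter_not
      (s := (Finset.univ : Finset (Fin (ℓ + α)))) (p := fun h => C a h = C b h)
    have hdist : hammingDist (C a) (C b) =
        (Finset.univ.filter (fun h : Fin (ℓ + α) => ¬ C a h = C b h)).card := rfl
    rw [← hdist] at hsplit
    rw [Finset.card_univ, Fintype.card_fin] at hsplit
    omega
  have hQbd : ∀ h, (Q h).card =
      ∑ q : Fin t × Fin t, (if q.1 ≠ q.2 ∧ q.1 ∈ S h ∧ q.2 ∈ S h then 1 else 0) := by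
    intro h; rw [hQ, Finset.card_filter]
  have hQsum : ∑ h : Fin (ℓ + α), (Q h).card ≤ (t * t - t) * α := by
    have hswap : ∑ h : Fin (ℓ + α), (Q h).card =
        ∑ q : Fin t × Fin t, ∑ h : Fin (ℓ + α),
          (if q.1 ≠ q.2 ∧ q.1 ∈ S h ∧ q.2 ∈ S h then 1 else 0) := by
      simp only [hQbd]
      rw [Finset.sum_comm]
    rw [hswap]
    have hterm : ∀ q : Fin t × Fin t,
        (∑ h : Fin (ℓ + α), (if q.1 ≠ q.2 ∧ q.1 ∈ S h ∧ q.2 ∈ S h then 1 else 0))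
          ≤ (if q.1 = q.2 then 0 else α) := by
      intro q
      by_cases hq : q.1 = q.2
      · simp [hq]
      · simp only [if_neg hq]
        calc ∑ h : Fin (ℓ + α), (if q.1 ≠ q.2 ∧ q.1 ∈ S h ∧ q.2 ∈ S h then 1 else 0)
            = (Finset.univ.filter
                (fun h : Fin (ℓ + α) => q.1 ≠ q.2 ∧ q.1 ∈ S h ∧ q.2 ∈ S h)).card := by
              rw [Finset.card_filter]
          _ ≤ (Finset.univ.filter
                (fun h : Fin (ℓ + α) => C (m q.1) h = C (m q.2) h)).card := by
              apply Finset.card_le_card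
              intro h hh
              rw [Finset.mem_filter] at hh ⊢
              obtain ⟨-, -, h1, h2⟩ := hh
              rw [hS, Finset.mem_filter] at h1 h2
              exact ⟨Finset.mem_univ _, hcol q.1 q.2 h _ _ h1.2 h2.2⟩
          _ ≤ α := hagree (m q.1) (m q.2) (fun e => hq (hm e))
    calc ∑ q : Fin t × Fin t, ∑ h : Fin (ℓ + α),
            (if q.1 ≠ q.2 ∧ q.1 ∈ S h ∧ q.2 ∈ S h then 1 else 0)
        ≤ ∑ q : Fin t × Fin t, (if q.1 = q.2 then 0 else α) :=
          Finset.sum_le_sum (fun q _ => hterm q)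
      _ = (t * t - t) * α := by
          have hset : (Finset.univ.filter (fun q : Fin t × Fin t => ¬ q.1 = q.2)) =
              (Finset.univ : Finset (Fin t)).offDiag := by
            ext q
            simp [Finset.mem_offDiag]
          rw [Finset.sum_ite, Finset.sum_const, Finset.sum_const, smul_eq_mul,
            smul_eq_mul, mul_zero, zero_add, hset, Finset.offDiag_card,
            Finset.card_univ, Fintype.card_fin]
  -- assemble the right part bound
  have hcard2 : T.card ≤ ℓ + α * t ^ 2 := by
    have h1 : T.card ≤ (ℓ + α) + ∑ h : Fin (ℓ + α), (Q h).card := by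
      rw [hTsum]
      calc ∑ h : Fin (ℓ + α), (S h).card
          ≤ ∑ h : Fin (ℓ + α), (1 + (Q h).card) :=
            Finset.sum_le_sum (fun h _ => hcolbd h)
        _ = (ℓ + α) + ∑ h : Fin (ℓ + α), (Q h).card := by
            rw [Finset.sum_add_distrib, Finset.sum_const, Finset.card_univ,
              Fintype.card_fin, smul_eq_mul, mul_one]
    have e2 : (t * t - t) * α = t * t * α - t * α := Nat.sub_mul _ _ _
    have e3 : α ≤ t * α := Nat.le_mul_of_pos_left α ht
    have e4 : t * α ≤ t * t * α :=
      Nat.mul_le_mul_right α (Nat.le_mul_of_pos_left t ht)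
    calc T.card ≤ (ℓ + α) + ∑ h : Fin (ℓ + α), (Q h).card := h1
      _ ≤ (ℓ + α) + (t * t - t) * α := Nat.add_le_add_left hQsum _
      _ = ℓ + (α + (t * t * α - t * α)) := by rw [e2, add_assoc]
      _ ≤ ℓ + (t * α + (t * t * α - t * α)) :=
          Nat.add_le_add_left (Nat.add_le_add_right e3 _) _
      _ = ℓ + t * t * α := by rw [Nat.add_sub_cancel' e4]
      _ = ℓ + α * t ^ 2 := by ring
  have hR : ∑ v ∈ Ir, w v ≤ ℓ + α * t ^ 2 := by
    rw [hRsum]; omega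
  calc (∑ v ∈ I.filter (fun v => v.isLeft = true), w v) + ∑ v ∈ Ir, w v
      ≤ t * ℓ + (ℓ + α * t ^ 2) := Nat.add_le_add hL hR
    _ = (t + 1) * ℓ + α * t ^ 2 := by ring
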